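/- For every σ ∈ S_n, Lmil(σ) = Lmic1(φ(σ)). -/

import Mathlib

open scoped Classical

theorem Equiv.Perm.apply_inv_self {α : Type*} (f : Equiv.Perm α) (x : α) : f (f⁻¹ x) = x :=
  f.apply_symm_apply x

theorem Equiv.Perm.inv_apply_self {α : Type*} (f : Equiv.Perm α) (x : α) : f⁻¹ (f x) = x :=
  f.symm_apply_apply x

namespace SortIdx

variable {n : ℕ}

noncomputable section

/-- The inversion number `inv σ := #{(i,j) : i < j ∧ σ i > σ j}`. -/
def inv (σ : Equiv.Perm (Fin n)) : ℕ :=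
  (Finset.univ.filter (fun p : Fin n × Fin n => p.1 < p.2 ∧ σ p.2 < σ p.1)).card

/-- The inversion set `Inv σ := {(i,j) : i < j ∧ σ i > σ j}`. -/
def InvSet (σ : Equiv.Perm (Fin n)) : Finset (Fin n × Fin n) :=
  Finset.univ.filter (fun p : Fin n × Fin n => p.1 < p.2 ∧ σ p.2 < σ p.1)

/-- Right-to-left minimum letters. -/
def RmilSet (σ : Equiv.Perm (Fin n)) : Finset (Fin n) :=
  (Finset.univ.filter (fun i => ∀ j, i < j → σ i < σ j)).image σ

/-- The number of right-to-left minima. -/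
def rmin (σ : Equiv.Perm (Fin n)) : ℕ := (RmilSet σ).card

/-- Right-to-left minimum places. -/
def RmipSet (σ : Equiv.Perm (Fin n)) : Finset (Fin n) :=
  Finset.univ.filter (fun i => ∀ j, i < j → σ i < σ j)

/-- Right-to-left maximum letters. -/
def RmalSet (σ : Equiv.Perm (Fin n)) : Finset (Fin n) :=
  (Finset.univ.filter (fun i => ∀ j, i < j → σ j < σ i)).image σ

/-- The number of right-to-left maxima. -/
def rmax (σ : Equiv.Perm (Fin n)) : ℕ := (RmalSet σ).card

/-- Left-to-right minimum letters. -/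
def LmilSet (σ : Equiv.Perm (Fin n)) : Finset (Fin n) :=
  (Finset.univ.filter (fun i => ∀ j, j < i → σ i < σ j)).image σ

/-- The number of left-to-right minima. -/
def lmin (σ : Equiv.Perm (Fin n)) : ℕ := (LmilSet σ).card

/-- Left-to-right minimum places. -/
def LmipSet (σ : Equiv.Perm (Fin n)) : Finset (Fin n) :=
  Finset.univ.filter (fun i => ∀ j, j < i → σ i < σ j)

/-- Left-to-right maximum letters. -/
def LmalSet (σ : Equiv.Perm (Fin n)) : Finset (Fin n) :=
  (Finset.univ.filter (fun i => ∀ j, j < i → σ j < σ i)).image σ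

/-- The number of left-to-right maxima. -/
def lmax (σ : Equiv.Perm (Fin n)) : ℕ := (LmalSet σ).card

/-- Left-to-right maximum places. -/
def LmapSet (σ : Equiv.Perm (Fin n)) : Finset (Fin n) :=
  Finset.univ.filter (fun i => ∀ j, j < i → σ j < σ i)

/-- `Cyc σ`: the set of smallest elements of the cycles of `σ`
(`i` is smallest in its cycle iff `i ≤ σ^k i` for all `k`). -/
def CycSet (σ : Equiv.Perm (Fin n)) : Finset (Fin n) :=
  Finset.univ.filter (fun i => ∀ k : ℕ, i ≤ (σ ^ k) i)

/-- The number of cycles of `σ` (fixed points included). -/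
def cyc (σ : Equiv.Perm (Fin n)) : ℕ := (CycSet σ).card

/-- One step of the sorting process computing the sorting index: repeatedly
put the largest not-yet-fixed letter `j` in its place by the transposition
`(i j)` where `i = σ⁻¹ j` is the place of the letter `j`, recording the
distance `j - i`.  This produces the unique factorization
`σ = (i₁ j₁)(i₂ j₂)⋯(i_k j_k)` with `j₁ < ⋯ < j_k`, `i_r < j_r`, and sums
the `j_r - i_r`.  The fuel `n` is always sufficient. -/
def sorAux : ℕ → Equiv.Perm (Fin n) → ℕ
  | 0, _ => 0
  | (fuel + 1), σ =>
    if h : σ.support.Nonempty then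
      (((σ.support.max' h : Fin n) : ℕ) - ((σ⁻¹ (σ.support.max' h) : Fin n) : ℕ)) +
        sorAux fuel (σ * Equiv.swap (σ⁻¹ (σ.support.max' h)) (σ.support.max' h))
    else 0

/-- The sorting index of Petersen. -/
def sor (σ : Equiv.Perm (Fin n)) : ℕ := sorAux n σ

theorem bcode_exists (σ : Equiv.Perm (Fin n)) (i : Fin n) :
    ∃ k : ℕ, 0 < k ∧ (σ⁻¹ ^ k) i ≤ i := by
  refine ⟨orderOf σ⁻¹, orderOf_pos σ⁻¹, ?_⟩
  rw [pow_orderOf_eq_one]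
  simp

/-- The `B`-code of `σ`: `Bcode σ i = σ^(-k) i` where `k ≥ 1` is minimal with
`σ^(-k) i ≤ i`. -/
def Bcode (σ : Equiv.Perm (Fin n)) (i : Fin n) : Fin n :=
  (σ⁻¹ ^ (Nat.find (bcode_exists σ i))) i

/-- The `B`-code as a sequence in `L_n` (1-indexed values: the entry at place
`i` is the 1-indexed name of the letter `Bcode σ i`). -/
def BcodeNat (σ : Equiv.Perm (Fin n)) : Fin n → ℕ :=
  fun i => ((Bcode σ i : Fin n) : ℕ) + 1

/-- The Lehmer code: `Leh σ i = #{j : j ≤ i ∧ σ j ≤ σ i}` (1-indexed values). -/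
def Leh (σ : Equiv.Perm (Fin n)) : Fin n → ℕ :=
  fun i => (Finset.univ.filter (fun j => j ≤ i ∧ σ j ≤ σ i)).card

/-- The `A`-code: `A σ := Leh σ⁻¹`. -/
def Acode (σ : Equiv.Perm (Fin n)) : Fin n → ℕ := Leh σ⁻¹

/-- `O(code) := {i : code i = 1}` (for `1`-indexed codes in `L_n`). -/
def Oset (code : Fin n → ℕ) : Finset (Fin n) :=
  Finset.univ.filter (fun i => code i = 1)

/-- `Lmic1 σ := O(B σ)`, the set of places where the `B`-code equals `1`,
equivalently the left-to-right minima of the shifted cycle containing `1`. -/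
def Lmic1Set (σ : Equiv.Perm (Fin n)) : Finset (Fin n) :=
  Oset (BcodeNat σ)

/-- `lmic1 σ := #{i : (B σ)_i = 1}`. -/
def lmic1 (σ : Equiv.Perm (Fin n)) : ℕ := (Lmic1Set σ).card

/-- The bijection `φ = B⁻¹ ∘ A` of Foata–Han. -/
def phi (σ : Equiv.Perm (Fin n)) : Equiv.Perm (Fin n) :=
  Function.invFun BcodeNat (Acode σ)

/-- The algorithm computing the induced set of a code: the list argument is
the list of places still to process (from the last to the first), `S` is the
set of letters still available.  At place `i` we pick the `(code i)`-th
smallest element `l` of `S` (1-indexed), put the pairs `(l, j)` for `j ∈ S`,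
`j > l` into the answer and remove `l` from `S`. -/
def inducedAux : List (Fin n) → Finset (Fin n) → (Fin n → ℕ) → Finset (Fin n × Fin n)
  | [], _, _ => ∅
  | (i :: is), S, code =>
      ((S.filter (fun j => (S.sort (· ≤ ·)).getD (code i - 1) i < j)).image
          (fun j => ((S.sort (· ≤ ·)).getD (code i - 1) i, j))) ∪
        inducedAux is (S.erase ((S.sort (· ≤ ·)).getD (code i - 1) i)) code

/-- The induced set `⟨code⟩` of a code in `L_n`. -/
def induced (code : Fin n → ℕ) : Finset (Fin n × Fin n) :=
  inducedAux (List.finRange n).reverse Finset.univ code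

/-- The sorting set `Sor σ := ⟨B σ⟩`. -/
def SorSet (σ : Equiv.Perm (Fin n)) : Finset (Fin n × Fin n) :=
  induced (BcodeNat σ)

/-- The descent set (as a set of places `i`, `0`-indexed, such that
`σ i > σ (i+1)`). -/
def DesSet (σ : Equiv.Perm (Fin n)) : Finset (Fin n) :=
  Finset.univ.filter (fun i => ∃ h : (i : ℕ) + 1 < n, σ ⟨(i : ℕ) + 1, h⟩ < σ i)

/-- The major index (descents being counted `1`-indexed). -/
def maj (σ : Equiv.Perm (Fin n)) : ℕ :=
  ∑ i ∈ DesSet σ, ((i : ℕ) + 1)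

/-- The charge `chg σ := ∑_{i ∈ Des σ⁻¹} (n - i)` (descents `1`-indexed). -/
def chg (σ : Equiv.Perm (Fin n)) : ℕ :=
  ∑ i ∈ DesSet σ⁻¹, (n - ((i : ℕ) + 1))

/-- The reverse-complement of `σ` : `τ i = n + 1 - σ (n + 1 - i)` (1-indexed). -/
def revcomp (σ : Equiv.Perm (Fin n)) : Equiv.Perm (Fin n) :=
  Fin.revPerm * σ * Fin.revPerm

/-- The reverse major index `rmaj σ := maj (revcomp σ)`. -/
def rmaj (σ : Equiv.Perm (Fin n)) : ℕ := maj (revcomp σ)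

end

end SortIdx

namespace SortIdx

variable {n : ℕ}

/-- `b` is the first element `≤ i` in the backward orbit of `i`. -/
def Hits (σ : Equiv.Perm (Fin n)) (i b : Fin n) : Prop :=
  ∃ k, 0 < k ∧ (σ⁻¹ ^ k) i = b ∧ b ≤ i ∧ ∀ l, 0 < l → l < k → i < (σ⁻¹ ^ l) i

lemma hits_bcode (σ : Equiv.Perm (Fin n)) (i : Fin n) : Hits σ i (Bcode σ i) := by
  classical
  refine ⟨Nat.find (bcode_exists σ i), (Nat.find_spec (bcode_exists σ i)).1, rfl,
    (Nat.find_spec (bcode_exists σ i)).2, ?_⟩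
  intro l hl hlk
  have h := Nat.find_min (bcode_exists σ i) hlk
  push_neg at h
  exact h hl

lemma hits_unique {σ : Equiv.Perm (Fin n)} {i b b' : Fin n}
    (h : Hits σ i b) (h' : Hits σ i b') : b = b' := by
  obtain ⟨k, hk, he, hb, hmin⟩ := h
  obtain ⟨k', hk', he', hb', hmin'⟩ := h'
  rcases lt_trichotomy k k' with hlt | heq | hlt
  · exact absurd hb (not_le.2 (he ▸ hmin' k hk hlt))
  · rw [← he, ← he', heq]
  · exact absurd hb' (not_le.2 (he' ▸ hmin k' hk' hlt))

lemma bcode_eq_of_hits {σ : Equiv.Perm (Fin n)} {i b : Fin n} (h : Hits σ i b) :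
    Bcode σ i = b := hits_unique (hits_bcode σ i) h

lemma bcode_of_fixed {σ : Equiv.Perm (Fin n)} {i : Fin n} (h : σ i = i) :
    Bcode σ i = i := by
  have hinv : σ⁻¹ i = i := by
    conv_lhs => rw [← h]
    simp
  refine bcode_eq_of_hits ⟨1, one_pos, ?_, le_refl i, fun l hl hl1 => absurd hl1 (by omega)⟩
  simpa using hinv

/-- The key orbit lemma: multiplying on the right by `swap j m` does not
change the `B`-code at places `< m`, provided `τ'` fixes everything `≥ m`. -/
lemma bcode_mul_swap (τ' : Equiv.Perm (Fin n)) (m : Fin n)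
    (hfix : ∀ x : Fin n, m ≤ x → τ' x = x)
    (j : Fin n) (i : Fin n) (hi : i < m) :
    Bcode (τ' * Equiv.swap j m) i = Bcode τ' i := by
  set τ : Equiv.Perm (Fin n) := τ' * Equiv.swap j m with hτ
  have hτinv : ∀ x : Fin n, τ⁻¹ x = Equiv.swap j m (τ'⁻¹ x) := by
    intro x
    simp [hτ, mul_inv_rev, Equiv.Perm.mul_apply, Equiv.swap_inv]
  have hfix' : ∀ x : Fin n, m ≤ x → τ'⁻¹ x = x := by
    intro x hx
    conv_lhs => rw [← hfix x hx]
    simp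
  have hpres : ∀ x : Fin n, x < m → τ'⁻¹ x < m := by
    intro x hx
    by_contra hge
    have h1 := hfix (τ'⁻¹ x) (le_of_not_gt hge)
    rw [Equiv.Perm.apply_inv_self] at h1
    rw [← h1] at hge
    exact hge hx
  have horb : ∀ k : ℕ, (τ'⁻¹ ^ k) i < m := by
    intro k
    induction k with
    | zero => simpa using hi
    | succ k ih =>
      rw [pow_succ', Equiv.Perm.mul_apply]
      exact hpres _ ih
  -- simulation: the backward τ-orbit of i follows the τ'-orbit, inserting m's
  have key : ∀ k : ℕ, ∃ d : ℕ, k ≤ d ∧ d ≤ 2 * k ∧ (τ⁻¹ ^ d) i = (τ'⁻¹ ^ k) i ∧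
      ∀ l, 0 < l → l < d →
        ((∃ l', 0 < l' ∧ l' < k ∧ (τ⁻¹ ^ l) i = (τ'⁻¹ ^ l') i) ∨ (τ⁻¹ ^ l) i = m) := by
    intro k
    induction k with
    | zero => exact ⟨0, le_refl 0, by omega, rfl, fun l hl hl0 => absurd hl0 (by omega)⟩
    | succ k ih =>
      obtain ⟨d, hkd, hd2, he, hint⟩ := ih
      set x : Fin n := (τ'⁻¹ ^ k) i with hx
      set y : Fin n := (τ'⁻¹ ^ (k + 1)) i with hy
      have hyx : y = τ'⁻¹ x := by rw [hy, hx, pow_succ', Equiv.Perm.mul_apply]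
      have hym : y ≠ m := (horb (k + 1)).ne
      have hstep : τ⁻¹ x = Equiv.swap j m y := by rw [hτinv, hyx]
      by_cases hyj : y = j
      · -- two steps: x → m → j = y
        have h1 : τ⁻¹ x = m := by rw [hstep, hyj, Equiv.swap_apply_left]
        have h2 : τ⁻¹ m = y := by
          rw [hτinv, hfix' m (le_refl m), Equiv.swap_apply_right, hyj]
        refine ⟨d + 2, by omega, by omega, ?_, ?_⟩
        · rw [pow_succ', pow_succ', Equiv.Perm.mul_apply, Equiv.Perm.mul_apply, he, hx, h1, h2]
        · intro l hl hld
          rcases lt_trichotomy l d with h | h | h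
          · rcases hint l hl h with ⟨l', hl', hl'k, hval⟩ | hval
            · exact Or.inl ⟨l', hl', by omega, hval⟩
            · exact Or.inr hval
          · subst h
            have hk0 : 0 < k := by omega
            exact Or.inl ⟨k, hk0, by omega, he⟩
          · have hld1 : l = d + 1 := by omega
            subst hld1
            right
            rw [pow_succ', Equiv.Perm.mul_apply, he, hx, h1]
      · -- one step: x → y
        have h1 : τ⁻¹ x = y := by
          rw [hstep, Equiv.swap_apply_of_ne_of_ne hyj hym]
        refine ⟨d + 1, by omega, by omega, ?_, ?_⟩
        · rw [pow_succ', Equiv.Perm.mul_apply, he, hx, h1]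
        · intro l hl hld
          rcases lt_or_eq_of_le (Nat.le_of_lt_succ hld) with h | h
          · rcases hint l hl h with ⟨l', hl', hl'k, hval⟩ | hval
            · exact Or.inl ⟨l', hl', by omega, hval⟩
            · exact Or.inr hval
          · subst h
            have hk0 : 0 < k := by omega
            exact Or.inl ⟨k, hk0, by omega, he⟩
  -- transfer the Hits witness from τ' to τ
  obtain ⟨k, hk, he, hb, hmin⟩ := hits_bcode τ' i
  obtain ⟨d, hkd, _, hed, hint⟩ := key k
  refine bcode_eq_of_hits ⟨d, by omega, by rw [hed, he], hb, ?_⟩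
  intro l hl hld
  rcases hint l hl hld with ⟨l', hl', hl'k, hval⟩ | hval
  · rw [hval]; exact hmin l' hl' hl'k
  · rw [hval]; exact hi

lemma bcodeNat_of_fixed {σ : Equiv.Perm (Fin n)} {i : Fin n} (h : σ i = i) :
    BcodeNat σ i = (i : ℕ) + 1 := by
  rw [BcodeNat, bcode_of_fixed h]

/-- Surjectivity of the `B`-code onto `L_n`, with control of fixed points. -/
lemma bcode_surj_aux : ∀ m : ℕ, ∀ c : Fin n → ℕ,
    (∀ i : Fin n, 1 ≤ c i ∧ c i ≤ (i : ℕ) + 1) →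
    (∀ i : Fin n, m ≤ (i : ℕ) → c i = (i : ℕ) + 1) →
    ∃ τ : Equiv.Perm (Fin n), (∀ i : Fin n, m ≤ (i : ℕ) → τ i = i) ∧ BcodeNat τ = c := by
  intro m
  induction m with
  | zero =>
    intro c _ h0
    refine ⟨1, fun i _ => rfl, funext fun i => ?_⟩
    rw [bcodeNat_of_fixed rfl, h0 i (Nat.zero_le _)]
  | succ m ih =>
    intro c hbd hup
    by_cases hmn : m < n
    · set M : Fin n := ⟨m, hmn⟩ with hM
      have hcM1 : 1 ≤ c M := (hbd M).1
      have hcM2 : c M ≤ m + 1 := (hbd M).2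
      set j : ℕ := c M - 1 with hjdef
      have hjm : j ≤ m := by omega
      set jF : Fin n := ⟨j, lt_of_le_of_lt hjm hmn⟩ with hjF
      set c' : Fin n → ℕ := Function.update c M (m + 1) with hc'
      have hbd' : ∀ i : Fin n, 1 ≤ c' i ∧ c' i ≤ (i : ℕ) + 1 := by
        intro i
        by_cases hiM : i = M
        · subst hiM; simp [hc', hM]
        · rw [hc', Function.update_of_ne hiM]; exact hbd i
      have hup' : ∀ i : Fin n, m ≤ (i : ℕ) → c' i = (i : ℕ) + 1 := by
        intro i hi
        by_cases hiM : i = M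
        · subst hiM; simp [hc', hM]
        · rw [hc', Function.update_of_ne hiM]
          refine hup i ?_
          have : (i : ℕ) ≠ m := fun h => hiM (Fin.ext h)
          omega
      obtain ⟨τ', hfix', hB'⟩ := ih c' hbd' hup'
      have hfixM : ∀ x : Fin n, M ≤ x → τ' x = x := fun x hx => hfix' x (by
        rwa [Fin.le_def] at hx)
      refine ⟨τ' * Equiv.swap jF M, ?_, funext fun i => ?_⟩
      · intro i hi
        have hiM : (M : ℕ) < (i : ℕ) := by simp [hM]; omega
        have h1 : i ≠ jF := by
          intro h; rw [h] at hiM; simp [hjF, hM] at hiM; omega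
        have h2 : i ≠ M := by
          intro h; rw [h] at hiM; omega
        rw [Equiv.Perm.mul_apply, Equiv.swap_apply_of_ne_of_ne h1 h2]
        exact hfix' i (by omega)
      · rcases lt_trichotomy (i : ℕ) m with hcase | hcase | hcase
        · -- i < m
          have hiM : i < M := by rwa [Fin.lt_def]
          have := bcode_mul_swap τ' M hfixM jF i hiM
          rw [BcodeNat, this, ← BcodeNat, hB', hc',
            Function.update_of_ne (fun h => by rw [h] at hiM; exact lt_irrefl _ hiM)]
        · -- i = m, i.e. i = M
          have hiM : i = M := Fin.ext hcase
          have hτ'M : τ'⁻¹ M = M := by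
            conv_lhs => rw [← hfixM M (le_refl M)]
            simp
          have hinv : (τ' * Equiv.swap jF M)⁻¹ M = jF := by
            rw [mul_inv_rev, Equiv.Perm.mul_apply, Equiv.swap_inv, hτ'M,
              Equiv.swap_apply_right]
          have hjFle : jF ≤ M := by rw [Fin.le_def]; exact hjm
          have hbc : Bcode (τ' * Equiv.swap jF M) M = jF := by
            refine bcode_eq_of_hits ⟨1, one_pos, ?_, hjFle,
              fun l hl hl1 => absurd hl1 (by omega)⟩
            simpa using hinv
          rw [hiM, BcodeNat, hbc]
          simp only [hjF]
          omega
        · -- i > m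
          have hiM : (M : ℕ) < (i : ℕ) := hcase
          have h1 : i ≠ jF := by
            intro h; have h3 : (i : ℕ) = j := by rw [h]
            omega
          have h2 : i ≠ M := by
            intro h; rw [h] at hiM; omega
          have hfixi : (τ' * Equiv.swap jF M) i = i := by
            rw [Equiv.Perm.mul_apply, Equiv.swap_apply_of_ne_of_ne h1 h2]
            exact hfix' i (by omega)
          rw [bcodeNat_of_fixed hfixi, hup i (by omega)]
    · -- m ≥ n : everything is vacuous
      have hvac : ∀ i : Fin n, m ≤ (i : ℕ) → c i = (i : ℕ) + 1 := by
        intro i hi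
        exact absurd (lt_of_le_of_lt hi i.isLt) (lt_irrefl m ∘ fun h => h.trans_le (le_of_not_gt hmn))
      obtain ⟨τ, hfix, hB⟩ := ih c hbd hvac
      exact ⟨τ, fun i hi => hfix i (by omega), hB⟩

lemma acode_bounds (σ : Equiv.Perm (Fin n)) (i : Fin n) :
    1 ≤ Acode σ i ∧ Acode σ i ≤ (i : ℕ) + 1 := by
  constructor
  · rw [Acode, Leh]
    refine Finset.card_pos.2 ⟨i, ?_⟩
    simp
  · rw [Acode, Leh]
    calc (Finset.univ.filter (fun j => j ≤ i ∧ σ⁻¹ j ≤ σ⁻¹ i)).card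
        ≤ (Finset.Iic i).card := by
          refine Finset.card_le_card ?_
          intro j hj
          simp only [Finset.mem_filter] at hj
          exact Finset.mem_Iic.2 hj.2.1
      _ = (i : ℕ) + 1 := Fin.card_Iic i

lemma bcodeNat_phi (σ : Equiv.Perm (Fin n)) : BcodeNat (phi σ) = Acode σ := by
  obtain ⟨τ, _, hB⟩ := bcode_surj_aux n (Acode σ) (acode_bounds σ)
    (fun i hi => absurd i.isLt (not_lt.2 hi))
  exact Function.invFun_eq ⟨τ, hB⟩

lemma acode_eq_one_iff (σ : Equiv.Perm (Fin n)) (i : Fin n) :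
    Acode σ i = 1 ↔ ∀ j : Fin n, j < i → σ⁻¹ i < σ⁻¹ j := by
  rw [Acode, Leh]
  constructor
  · intro h j hj
    obtain ⟨a, ha⟩ := Finset.card_eq_one.1 h
    have hia : i ∈ ({a} : Finset (Fin n)) := by
      rw [← ha]; simp
    have hai : a = i := (Finset.mem_singleton.1 hia).symm
    by_contra hle
    have hjm : j ∈ Finset.univ.filter (fun j => j ≤ i ∧ σ⁻¹ j ≤ σ⁻¹ i) := by
      simp only [Finset.mem_filter, Finset.mem_univ, true_and]
      exact ⟨hj.le, le_of_not_gt hle⟩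
    rw [ha, hai, Finset.mem_singleton] at hjm
    exact hj.ne hjm
  · intro h
    have : Finset.univ.filter (fun j => j ≤ i ∧ σ⁻¹ j ≤ σ⁻¹ i) = {i} := by
      ext j
      simp only [Finset.mem_filter, Finset.mem_univ, true_and, Finset.mem_singleton]
      constructor
      · rintro ⟨hji, hσ⟩
        rcases lt_or_eq_of_le hji with hlt | heq
        · exact absurd hσ (not_le.2 (h j hlt))
        · exact heq
      · rintro rfl; exact ⟨le_refl _, le_refl _⟩
    rw [this, Finset.card_singleton]

end SortIdx

/-- Lemma 2.3.  `Lmil σ = Lmic₁ (φ σ)`. -/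
theorem lmil_eq_lmic1_phi (n : ℕ) (σ : Equiv.Perm (Fin n)) :
    SortIdx.LmilSet σ = SortIdx.Lmic1Set (SortIdx.phi σ) := by
  ext v
  rw [SortIdx.Lmic1Set, SortIdx.Oset]
  rw [Finset.mem_filter]
  simp only [Finset.mem_univ, true_and]
  rw [SortIdx.bcodeNat_phi, SortIdx.acode_eq_one_iff]
  rw [SortIdx.LmilSet, Finset.mem_image]
  constructor
  · rintro ⟨p, hp, rfl⟩
    rw [Finset.mem_filter] at hp
    intro w hw
    by_contra hle
    have hlt : σ⁻¹ w < σ⁻¹ (σ p) := by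
      rcases lt_or_eq_of_le (le_of_not_gt hle) with h | h
      · exact h
      · exact absurd (Equiv.injective σ⁻¹ h ▸ hw) (lt_irrefl _)
    rw [Equiv.Perm.inv_apply_self] at hlt
    have := hp.2 (σ⁻¹ w) hlt
    rw [Equiv.Perm.apply_inv_self] at this
    exact (lt_asymm hw) this
  · intro h
    refine ⟨σ⁻¹ v, Finset.mem_filter.2 ⟨Finset.mem_univ _, ?_⟩, Equiv.Perm.apply_inv_self σ v⟩
    intro q hq
    rw [Equiv.Perm.apply_inv_self]
    by_contra hle
    have hne : σ q ≠ v := by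
      intro hEq
      rw [← hEq, Equiv.Perm.inv_apply_self] at hq
      exact lt_irrefl _ hq
    have hlt : σ q < v := lt_of_le_of_ne (le_of_not_gt hle) hne
    have := h (σ q) hlt
    rw [Equiv.Perm.inv_apply_self] at this
    exact (lt_asymm hq) this
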